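/- Let H ∈ ℝ^{d×d} be symmetric positive definite with smallest eigenvalue μ > 0, S ⊆ [d], and define H^S = I_S^⊤ (I_S H^{-1} I_S^⊤)^{-1} I_S. Then ‖H^{-1} H^S H^{-1}‖₂ ≤ 1/μ. -/

import Mathlib

set_option maxHeartbeats 1000000


open Matrix Finset

/-- The selection matrix `I_S ∈ ℝ^{|S|×d}` whose rows are the standard basis vectors
`eᵢᵀ` for `i ∈ S`. -/
def selMat {d : ℕ} (S : Finset (Fin d)) : Matrix {i // i ∈ S} (Fin d) ℝ :=
  Matrix.of fun i j => if (i : Fin d) = j then (1 : ℝ) else 0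

/-- The matrix `H^S = I_Sᵀ (I_S H⁻¹ I_Sᵀ)⁻¹ I_S`. -/
noncomputable def HmatS {d : ℕ} (H : Matrix (Fin d) (Fin d) ℝ) (S : Finset (Fin d)) :
    Matrix (Fin d) (Fin d) ℝ :=
  (selMat S)ᵀ * (selMat S * H⁻¹ * (selMat S)ᵀ)⁻¹ * selMat S

/-- The diagonal projection matrix `E_S` onto the coordinates in `S`. -/
def projMat {d : ℕ} (S : Finset (Fin d)) : Matrix (Fin d) (Fin d) ℝ :=
  Matrix.diagonal fun i => if i ∈ S then (1 : ℝ) else 0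

/-- For symmetric positive definite `H` with `μ·I ⪯ H` (smallest eigenvalue `μ > 0`),
the spectral norm bound `‖H⁻¹ H^S H⁻¹‖₂ ≤ 1/μ` holds, i.e.
`‖H⁻¹ H^S H⁻¹ x‖₂ ≤ (1/μ)‖x‖₂` for every vector `x`. -/
lemma selMat_transpose_mulVec {d : ℕ} (S : Finset (Fin d)) (v : {i // i ∈ S} → ℝ)
    (i : {i // i ∈ S}) : ((selMat S)ᵀ *ᵥ v) (i : Fin d) = v i := by
  simp only [Matrix.mulVec, dotProduct, transpose_apply, selMat, Matrix.of_apply]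
  rw [Finset.sum_eq_single i]
  · simp
  · intro b _ hb
    have : (b : Fin d) ≠ (i : Fin d) := fun h => hb (Subtype.ext h)
    simp [this]
  · simp

lemma B_posDef {d : ℕ} (H : Matrix (Fin d) (Fin d) ℝ) (hH : H.PosDef) (S : Finset (Fin d)) :
    (selMat S * H⁻¹ * (selMat S)ᵀ).PosDef := by
  have hHinv : (H⁻¹).PosDef := hH.inv
  refine posDef_iff_dotProduct_mulVec.mpr ⟨?_, ?_⟩
  · have := isHermitian_mul_mul_conjTranspose (selMat S) hHinv.1
    rwa [conjTranspose_eq_transpose_of_trivial] at this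
  · intro v hv
    have hsv : star v = v := by funext i; simp
    set w := (selMat S)ᵀ *ᵥ v with hw
    have hwne : w ≠ 0 := by
      intro h
      apply hv
      funext i
      have := congrFun h (i : Fin d)
      rwa [hw, selMat_transpose_mulVec] at this
    have key : v ⬝ᵥ (selMat S * H⁻¹ * (selMat S)ᵀ) *ᵥ v = w ⬝ᵥ H⁻¹ *ᵥ w := by
      rw [← Matrix.mulVec_mulVec, ← Matrix.mulVec_mulVec, dotProduct_mulVec,
        ← Matrix.mulVec_transpose]
    have := hHinv.dotProduct_mulVec_pos hwne
    rw [star_trivial] at this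
    simpa [hsv, key] using this

theorem spectral_norm_bound {d : ℕ} (H : Matrix (Fin d) (Fin d) ℝ) (hH : H.PosDef)
    (μ : ℝ) (hμ : 0 < μ)
    (hμH : ∀ x : Fin d → ℝ, μ * ∑ i, x i ^ 2 ≤ x ⬝ᵥ H.mulVec x)
    (S : Finset (Fin d)) :
    ∀ x : Fin d → ℝ,
      Real.sqrt (∑ i, ((H⁻¹ * HmatS H S * H⁻¹).mulVec x i) ^ 2) ≤
        (1 / μ) * Real.sqrt (∑ i, x i ^ 2) := by
  set A := selMat S with hA
  set B := selMat S * H⁻¹ * (selMat S)ᵀ with hB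
  have hBpd : B.PosDef := B_posDef H hH S
  have hBdet : IsUnit B.det := (hBpd.det_pos.ne').isUnit
  have hHdet : IsUnit H.det := (hH.det_pos.ne').isUnit
  set K := HmatS H S with hK
  set M := H⁻¹ * K * H⁻¹ with hM
  -- key algebraic identity : K * H⁻¹ * K = K
  have hmid : ∀ X : Matrix {i // i ∈ S} (Fin d) ℝ, A * (H⁻¹ * (Aᵀ * X)) = B * X := by
    intro X
    rw [← Matrix.mul_assoc, ← Matrix.mul_assoc, hB]
  have hBcanc : ∀ X : Matrix {i // i ∈ S} (Fin d) ℝ, B⁻¹ * (B * X) = X := by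
    intro X
    rw [← Matrix.mul_assoc, Matrix.nonsing_inv_mul B hBdet, Matrix.one_mul]
  have hKHK : K * H⁻¹ * K = K := by
    rw [hK]
    show (Aᵀ * B⁻¹ * A) * H⁻¹ * (Aᵀ * B⁻¹ * A) = Aᵀ * B⁻¹ * A
    simp only [Matrix.mul_assoc]
    rw [hmid, hBcanc]
  have hMHM : M * H * M = M := by
    rw [hM]
    simp only [Matrix.mul_assoc]
    rw [← Matrix.mul_assoc H H⁻¹, Matrix.mul_nonsing_inv H hHdet, Matrix.one_mul]
    rw [← Matrix.mul_assoc K H⁻¹, ← Matrix.mul_assoc (K * H⁻¹) K, hKHK]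
  -- symmetry of M
  have hHsym : Hᵀ = H := hH.1
  have hHinvsym : (H⁻¹)ᵀ = H⁻¹ := by rw [Matrix.transpose_nonsing_inv, hHsym]
  have hBsym : Bᵀ = B := hBpd.1
  have hBinvsym : (B⁻¹)ᵀ = B⁻¹ := by rw [Matrix.transpose_nonsing_inv, hBsym]
  have hKsym : Kᵀ = K := by
    rw [hK]
    show (Aᵀ * B⁻¹ * A)ᵀ = Aᵀ * B⁻¹ * A
    rw [Matrix.transpose_mul, Matrix.transpose_mul, hBinvsym, Matrix.transpose_transpose,
      Matrix.mul_assoc]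
  have hMsym : Mᵀ = M := by
    rw [hM, Matrix.transpose_mul, Matrix.transpose_mul, hHinvsym, hKsym, Matrix.mul_assoc]
  intro x
  set y := M *ᵥ x with hy
  have hyM : y = x ᵥ* M := by
    rw [hy]; nth_rewrite 1 [← hMsym]; exact Matrix.mulVec_transpose M x
  have key1 : y ⬝ᵥ H *ᵥ y = x ⬝ᵥ y := by
    calc y ⬝ᵥ H *ᵥ y = (x ᵥ* M) ⬝ᵥ (H *ᵥ (M *ᵥ x)) := by rw [← hyM, hy]
    _ = x ⬝ᵥ (M *ᵥ (H *ᵥ (M *ᵥ x))) := by rw [← Matrix.dotProduct_mulVec]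
    _ = x ⬝ᵥ ((M * H * M) *ᵥ x) := by rw [Matrix.mulVec_mulVec, Matrix.mulVec_mulVec]
    _ = x ⬝ᵥ y := by rw [hMHM, hy]
  have key2 : μ * ∑ i, y i ^ 2 ≤ x ⬝ᵥ y := key1 ▸ hμH y
  set s := Real.sqrt (∑ i, x i ^ 2) with hs
  set t := Real.sqrt (∑ i, y i ^ 2) with ht
  have hsnn : 0 ≤ s := Real.sqrt_nonneg _
  have htnn : 0 ≤ t := Real.sqrt_nonneg _
  have ht2 : t ^ 2 = ∑ i, y i ^ 2 := Real.sq_sqrt (Finset.sum_nonneg fun i _ => sq_nonneg _)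
  have hs2 : s ^ 2 = ∑ i, x i ^ 2 := Real.sq_sqrt (Finset.sum_nonneg fun i _ => sq_nonneg _)
  -- Cauchy-Schwarz
  have hCS : x ⬝ᵥ y ≤ s * t := by
    have h1 : (∑ i, x i * y i) ^ 2 ≤ (∑ i, x i ^ 2) * ∑ i, y i ^ 2 :=
      Finset.sum_mul_sq_le_sq_mul_sq _ _ _
    have h2 : x ⬝ᵥ y = ∑ i, x i * y i := rfl
    rw [h2]
    calc ∑ i, x i * y i ≤ |∑ i, x i * y i| := le_abs_self _
    _ = Real.sqrt ((∑ i, x i * y i) ^ 2) := (Real.sqrt_sq_eq_abs _).symm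
    _ ≤ Real.sqrt ((∑ i, x i ^ 2) * ∑ i, y i ^ 2) := Real.sqrt_le_sqrt h1
    _ = s * t := by rw [hs, ht, Real.sqrt_mul (Finset.sum_nonneg fun i _ => sq_nonneg _)]
  have hfinal : μ * t ^ 2 ≤ s * t := by rw [ht2]; exact key2.trans hCS
  show t ≤ (1 / μ) * s
  rcases eq_or_lt_of_le htnn with h0 | h0
  · rw [← h0]
    exact mul_nonneg (le_of_lt (by simpa using one_div_pos.mpr hμ)) hsnn
  · have : μ * t ≤ s := by
      have := hfinal
      rw [pow_two, ← mul_assoc] at this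
      exact le_of_mul_le_mul_right this h0
    rw [one_div, inv_mul_eq_div, le_div_iff₀ hμ]
    linarith [this]
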